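/- Let J(M) = {z = (z_2,…,z_n) ∈ ℤ_{≥0}^{n-1} : z_2ρ_2 + ⋯ + z_nρ_n = M and z_2 + ⋯ + z_n ≤ M} and suppose J(M) is nonempty, with cardinality m = |J(M)| (which is finite). Then the dimension d of the ℂ-vector space L_M of base functions of degree M satisfies 1 ≤ d ≤ m. -/

import Mathlib

open MvPolynomial

/-- The right-hand side of system (4.1): `ẏ₁ = -y₁² + φ₁`,
`ẏᵢ = (ρᵢ - 1) y₁ yᵢ + φᵢ` for `i ≠ 1`. -/
noncomputable def rhs41 (n : ℕ) [NeZero n] (ρ : Fin n → ℂ)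
    (φ : Fin n → MvPolynomial (Fin n) ℂ) (i : Fin n) : MvPolynomial (Fin n) ℂ :=
  if i = 0 then -(X 0) ^ 2 + φ 0 else C (ρ i - 1) * X 0 * X i + φ i

/-- The derivation `D₊` associated with system (4.1), as a linear map. -/
noncomputable def dplus41 (n : ℕ) [NeZero n] (ρ : Fin n → ℂ)
    (φ : Fin n → MvPolynomial (Fin n) ℂ) :
    MvPolynomial (Fin n) ℂ →ₗ[ℂ] MvPolynomial (Fin n) ℂ :=
  ∑ i : Fin n, (LinearMap.mulLeft ℂ (rhs41 n ρ φ i)).comp (pderiv i).toLinearMap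

open Finsupp

namespace Thm7

set_option linter.unusedSectionVars false

variable {n : ℕ} [NeZero n]

local notation "R" => MvPolynomial (Fin n) ℂ

/-- Sum of the exponents over `Fin n` equals the `Finsupp.degree`. -/
lemma degree_eq_sum (σ : Fin n →₀ ℕ) : σ.degree = ∑ i, σ i := by
  rw [Finsupp.degree]
  exact Finset.sum_subset (Finset.subset_univ _) (by
    intro x _ hx
    simpa using (Finsupp.notMem_support_iff.mp hx))

lemma coeff_pderiv (i : Fin n) (p : R) (m : Fin n →₀ ℕ) :
    coeff m (pderiv i p) = ((m i : ℂ) + 1) * coeff (m + Finsupp.single i 1) p := by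
  induction p using MvPolynomial.induction_on' with
  | monomial s a =>
    rw [pderiv_monomial]
    rw [coeff_monomial, coeff_monomial]
    by_cases h : s = m + Finsupp.single i 1
    · subst h
      have h1 : Finsupp.single i 1 ≤ m + Finsupp.single i 1 := le_add_self
      have h2 : m + Finsupp.single i 1 - Finsupp.single i 1 = m := by
        simp
      rw [if_pos h2, if_pos rfl]
      have : ((m + Finsupp.single i 1) : Fin n →₀ ℕ) i = m i + 1 := by simp
      rw [this]
      push_cast
      ring
    · rw [if_neg h]
      by_cases h2 : s - Finsupp.single i 1 = m
      · rw [if_pos h2]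
        have hsi : s i = 0 := by
          by_contra hs
          apply h
          have hle : Finsupp.single i 1 ≤ s := by
            rw [Finsupp.single_le_iff]
            omega
          rw [← h2, tsub_add_cancel_of_le hle]
        simp [hsi]
      · rw [if_neg h2, mul_zero]
  | add p q hp hq => simp [hp, hq, mul_add]

lemma coeff_X_mul_pderiv (i : Fin n) (p : R) (m : Fin n →₀ ℕ) :
    coeff m (X i * pderiv i p) = (m i : ℂ) * coeff m p := by
  classical
  rw [coeff_X_mul']
  by_cases h : i ∈ m.support
  · rw [if_pos h, coeff_pderiv]
    have hmi : m i ≠ 0 := Finsupp.mem_support_iff.mp h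
    have h1 : ((m - Finsupp.single i 1) : Fin n →₀ ℕ) i = m i - 1 := by simp
    have h2 : m - Finsupp.single i 1 + Finsupp.single i 1 = m := by
      apply tsub_add_cancel_of_le
      rw [Finsupp.single_le_iff]; omega
    rw [h1, h2]
    congr 1
    rw [Nat.cast_sub (by omega : 1 ≤ m i)]
    push_cast
    ring
  · rw [if_neg h]
    have : m i = 0 := Finsupp.notMem_support_iff.mp h
    simp [this]


/-- `p` does not involve the variable `y₀`. -/
def Yfree (p : R) : Prop := ∀ σ : Fin n →₀ ℕ, σ 0 ≠ 0 → coeff σ p = 0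

lemma yfree_of_pderiv_zero {p : R} (h : pderiv (0 : Fin n) p = 0) : Yfree p := by
  intro σ hσ
  have h1 : coeff (σ - Finsupp.single 0 1) (pderiv (0 : Fin n) p) = 0 := by rw [h]; simp
  rw [coeff_pderiv] at h1
  have h2 : σ - Finsupp.single 0 1 + Finsupp.single 0 1 = σ := by
    apply tsub_add_cancel_of_le
    rw [Finsupp.single_le_iff]; omega
  rw [h2] at h1
  rcases mul_eq_zero.mp h1 with h3 | h3
  · exact absurd h3 (Nat.cast_add_one_ne_zero _)
  · exact h3

lemma pderiv_zero_of_yfree {p : R} (h : Yfree p) : pderiv (0 : Fin n) p = 0 := by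
  ext m
  rw [coeff_pderiv]
  rw [h (m + Finsupp.single 0 1) (by simp), coeff_zero, mul_zero]

lemma Yfree.add {p q : R} (hp : Yfree p) (hq : Yfree q) : Yfree (p + q) := by
  intro σ hσ; rw [coeff_add, hp σ hσ, hq σ hσ, add_zero]

lemma Yfree.neg {p : R} (hp : Yfree p) : Yfree (-p) := by
  intro σ hσ; rw [coeff_neg, hp σ hσ, neg_zero]

lemma Yfree.smul {p : R} (c : ℂ) (hp : Yfree p) : Yfree (c • p) := by
  intro σ hσ; rw [coeff_smul, hp σ hσ, smul_zero]

lemma Yfree.zero : Yfree (0 : R) := fun σ _ => coeff_zero σ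

lemma Yfree.sub {p q : R} (hp : Yfree p) (hq : Yfree q) : Yfree (p - q) := by
  intro σ hσ; rw [coeff_sub, hp σ hσ, hq σ hσ, sub_zero]

lemma Yfree.Cmul {p : R} (c : ℂ) (hp : Yfree p) : Yfree (C c * p) := by
  intro σ hσ; rw [coeff_C_mul, hp σ hσ, mul_zero]

lemma Yfree.mul {p q : R} (hp : Yfree p) (hq : Yfree q) : Yfree (p * q) := by
  intro σ hσ
  rw [coeff_mul]
  apply Finset.sum_eq_zero
  intro x hx
  rw [Finset.HasAntidiagonal.mem_antidiagonal] at hx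
  by_cases h1 : x.1 0 = 0
  · have h2 : x.2 0 ≠ 0 := by
      intro hc
      apply hσ
      rw [← hx]
      simp [Finsupp.add_apply, h1, hc]
    rw [hq x.2 h2, mul_zero]
  · rw [hp x.1 h1, zero_mul]

lemma Yfree.pderiv {p : R} (i : Fin n) (hi : i ≠ 0) (hp : Yfree p) :
    Yfree (pderiv i p) := by
  intro σ hσ
  rw [coeff_pderiv, hp (σ + Finsupp.single i 1) (by
    simp [Finsupp.add_apply, Finsupp.single_eq_of_ne hi, hσ]), mul_zero]

lemma degree_add' (σ τ : Fin n →₀ ℕ) : (σ + τ).degree = σ.degree + τ.degree := by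
  simp [degree_eq_sum, Finsupp.add_apply, Finset.sum_add_distrib]

lemma degree_single' (i : Fin n) (a : ℕ) : (Finsupp.single i a : Fin n →₀ ℕ).degree = a := by
  simp [degree_eq_sum, Finsupp.single_apply]

/-- Characterisation of homogeneity via coefficients. -/
lemma isHomog_iff {p : R} {k : ℕ} :
    p.IsHomogeneous k ↔ ∀ d : Fin n →₀ ℕ, coeff d p ≠ 0 → d.degree = k := by
  constructor
  · intro h d hd
    by_contra hc
    exact hd (h.coeff_eq_zero hc)
  · intro h d hd
    have := h d hd
    rw [Finsupp.degree_eq_weight_one] at this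
    exact this

lemma IsHomog.pderiv' {p : R} {k : ℕ} (i : Fin n) (hp : p.IsHomogeneous k) :
    (pderiv i p).IsHomogeneous (k - 1) := by
  rw [isHomog_iff] at hp ⊢
  intro d hd
  rw [coeff_pderiv] at hd
  have h1 : coeff (d + Finsupp.single i 1) p ≠ 0 := by
    intro hc; rw [hc, mul_zero] at hd; exact hd rfl
  have h2 := hp _ h1
  rw [degree_add', degree_single'] at h2
  omega


section Ops

variable (ρ : Fin n → ℂ) (φ : Fin n → MvPolynomial (Fin n) ℂ) (M : ℕ)

/-- The resonance weight of an exponent. -/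
noncomputable def W (σ : Fin n →₀ ℕ) : ℂ := ∑ i ∈ Finset.univ.erase 0, (σ i : ℂ) * ρ i

lemma W_add_single (σ : Fin n →₀ ℕ) (a : ℕ) : W ρ (σ + Finsupp.single 0 a) = W ρ σ := by
  unfold W
  apply Finset.sum_congr rfl
  intro i hi
  have hi0 : i ≠ 0 := Finset.ne_of_mem_erase hi
  rw [Finsupp.add_apply, Finsupp.single_apply, if_neg (fun h => hi0 h.symm)]
  norm_num

/-- The operator `A = ∑_{i≠0} ρᵢ yᵢ ∂ᵢ`. -/
noncomputable def opA (p : R) : R :=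
  ∑ i ∈ Finset.univ.erase 0, C (ρ i) * (X i * pderiv i p)

/-- The operator `Φ = ∑ᵢ φᵢ ∂ᵢ`. -/
noncomputable def opPhi (p : R) : R := ∑ i, φ i * pderiv i p

/-- The "inverse" of `A - M` : divide each coefficient by `W σ - M`. -/
noncomputable def opS (p : R) : R :=
  ∑ σ ∈ p.support, (monomial σ) ((W ρ σ - (M : ℂ))⁻¹ * coeff σ p)

lemma coeff_opA (p : R) (σ : Fin n →₀ ℕ) : coeff σ (opA ρ p) = W ρ σ * coeff σ p := by
  unfold opA W
  rw [MvPolynomial.coeff_sum, Finset.sum_mul]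
  apply Finset.sum_congr rfl
  intro i _
  rw [coeff_C_mul, coeff_X_mul_pderiv]
  ring

lemma coeff_opS (p : R) (σ : Fin n →₀ ℕ) :
    coeff σ (opS ρ M p) = (W ρ σ - (M : ℂ))⁻¹ * coeff σ p := by
  unfold opS
  rw [MvPolynomial.coeff_sum]
  by_cases h : σ ∈ p.support
  · rw [Finset.sum_eq_single σ]
    · rw [coeff_monomial, if_pos rfl]
    · intro b _ hb
      rw [coeff_monomial, if_neg hb]
    · intro hc; exact absurd h hc
  · rw [MvPolynomial.notMem_support_iff.mp h, mul_zero]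
    apply Finset.sum_eq_zero
    intro b hb
    rw [coeff_monomial, if_neg]
    intro hc; subst hc; exact h hb

lemma yfree_opS {p : R} (hp : Yfree p) : Yfree (opS ρ M p) := by
  intro σ hσ; rw [coeff_opS, hp σ hσ, mul_zero]

lemma isHomog_opS {p : R} {k : ℕ} (hp : p.IsHomogeneous k) :
    (opS ρ M p).IsHomogeneous k := by
  rw [isHomog_iff] at hp ⊢
  intro d hd
  rw [coeff_opS] at hd
  exact hp d (fun hc => hd (by rw [hc, mul_zero]))

lemma yfree_opPhi {p : R} (hφ : ∀ i, Yfree (φ i)) (hp : Yfree p) : Yfree (opPhi φ p) := by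
  intro σ hσ
  unfold opPhi
  rw [MvPolynomial.coeff_sum]
  apply Finset.sum_eq_zero
  intro i _
  by_cases hi : i = 0
  · subst hi
    rw [pderiv_zero_of_yfree hp, mul_zero, coeff_zero]
  · exact Yfree.mul (hφ i) (Yfree.pderiv i hi hp) σ hσ

lemma isHomog_opPhi {p : R} {k : ℕ} (hφ : ∀ i, (φ i).IsHomogeneous 2)
    (hp : p.IsHomogeneous k) : (opPhi φ p).IsHomogeneous (k + 1) := by
  unfold opPhi
  rw [isHomog_iff]
  intro d hd
  rw [MvPolynomial.coeff_sum] at hd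
  obtain ⟨i, _, hi⟩ := Finset.exists_ne_zero_of_sum_ne_zero hd
  rcases Nat.eq_zero_or_pos k with hk | hk
  · exfalso
    subst hk
    have hzero : MvPolynomial.pderiv i p = 0 := by
      ext m
      rw [coeff_pderiv]
      rw [isHomog_iff] at hp
      have : coeff (m + Finsupp.single i 1) p = 0 := by
        by_contra hc
        have := hp _ hc
        rw [degree_add', degree_single'] at this
        omega
      rw [this, mul_zero, coeff_zero]
    rw [hzero, mul_zero, coeff_zero] at hi
    exact hi rfl
  · have h2 : (φ i * MvPolynomial.pderiv i p).IsHomogeneous (2 + (k - 1)) :=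
      (hφ i).mul (IsHomog.pderiv' i hp)
    rw [isHomog_iff] at h2
    have := h2 d hi
    omega

lemma IsHomog.mul_phi {p : R} {k : ℕ} (hφ : ∀ i, (φ i).IsHomogeneous 2)
    (hp : p.IsHomogeneous k) : (φ 0 * p).IsHomogeneous (k + 2) := by
  have := (hφ 0).mul hp
  rwa [Nat.add_comm] at this

lemma sum_X_pderiv {p : R} {k : ℕ} (hp : p.IsHomogeneous k) :
    ∑ i, X i * pderiv i p = C (k : ℂ) * p := by
  ext σ
  rw [MvPolynomial.coeff_sum, coeff_C_mul]
  simp_rw [coeff_X_mul_pderiv]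
  rw [← Finset.sum_mul]
  by_cases h : coeff σ p = 0
  · rw [h, mul_zero, mul_zero]
  · congr 1
    rw [isHomog_iff] at hp
    have := hp σ h
    rw [degree_eq_sum] at this
    rw [← this]
    push_cast
    rfl

lemma opA_sub_opS (p : R) (h : ∀ σ : Fin n →₀ ℕ, coeff σ p ≠ 0 → W ρ σ ≠ (M : ℂ)) :
    opA ρ (opS ρ M p) - (M : ℂ) • opS ρ M p = p := by
  ext σ
  rw [coeff_sub, coeff_opA, coeff_smul, coeff_opS, smul_eq_mul]
  by_cases hc : coeff σ p = 0
  · rw [hc]; simp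
  · have hW : W ρ σ - (M : ℂ) ≠ 0 := sub_ne_zero.mpr (h σ hc)
    field_simp

end Ops


section Key

variable (ρ : Fin n → ℂ) (φ : Fin n → MvPolynomial (Fin n) ℂ)

lemma dplus41_apply (p : R) :
    dplus41 n ρ φ p = ∑ i, rhs41 n ρ φ i * pderiv i p := by
  simp [dplus41, LinearMap.sum_apply, LinearMap.comp_apply, LinearMap.mulLeft_apply]

lemma cast_mul_pow_head (a : ℕ) (p q : R) :
    (a : R) * (X 0 ^ 2 * (X 0 ^ (a-1) * p)) = (a : R) * (X 0 ^ (a+1) * p) := by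
  cases a with
  | zero => simp
  | succ s =>
    simp only [Nat.add_sub_cancel]
    have : (X 0 : R) ^ 2 * X 0 ^ s = X 0 ^ (s + 1 + 1) := by
      rw [← pow_add]; ring_nf
    rw [← mul_assoc (X 0 ^ 2), this]

lemma key_identity (hφy : ∀ i, Yfree (φ i)) {q : R} {k : ℕ}
    (hq : Yfree q) (hqh : q.IsHomogeneous k) (a : ℕ) :
    dplus41 n ρ φ (X 0 ^ a * q) =
      (X 0 ^ (a+1) * opA ρ q - C ((a : ℂ) + (k : ℂ)) * (X 0 ^ (a+1) * q))
      + X 0 ^ a * opPhi φ q + C (a : ℂ) * (X 0 ^ (a-1) * (φ 0 * q)) := by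
  have hd0 : pderiv (0 : Fin n) (X 0 ^ a * q) = (a : R) * (X 0 ^ (a-1) * q) := by
    rw [pderiv_mul, pderiv_zero_of_yfree hq, mul_zero, add_zero, pderiv_pow,
      pderiv_X_self, mul_one, mul_assoc]
  have hdi : ∀ i : Fin n, i ≠ 0 → pderiv i (X 0 ^ a * q) = X 0 ^ a * pderiv i q := by
    intro i hi
    rw [pderiv_mul, pderiv_pow, pderiv_X_of_ne (fun h => hi h.symm), mul_zero, zero_mul,
      zero_add]
  have hEuler : ∑ i ∈ Finset.univ.erase 0, X i * pderiv i q = C (k : ℂ) * q := by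
    rw [← sum_X_pderiv hqh, ← Finset.sum_erase_add _ _ (Finset.mem_univ (0 : Fin n)),
      pderiv_zero_of_yfree hq, mul_zero, add_zero]
  have hPhi : opPhi φ q = ∑ i ∈ Finset.univ.erase 0, φ i * pderiv i q := by
    unfold opPhi
    rw [← Finset.sum_erase_add _ _ (Finset.mem_univ (0 : Fin n)),
      pderiv_zero_of_yfree hq, mul_zero, add_zero]
  rw [dplus41_apply, ← Finset.sum_erase_add _ _ (Finset.mem_univ (0 : Fin n)), hd0]
  have hsum : ∑ i ∈ Finset.univ.erase 0, rhs41 n ρ φ i * pderiv i (X 0 ^ a * q)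
      = ∑ i ∈ Finset.univ.erase 0,
        (X 0 ^ (a+1) * (C (ρ i) * (X i * pderiv i q))
          - X 0 ^ (a+1) * (X i * pderiv i q) + X 0 ^ a * (φ i * pderiv i q)) := by
    apply Finset.sum_congr rfl
    intro i hi
    have hi0 : i ≠ 0 := Finset.ne_of_mem_erase hi
    rw [hdi i hi0]
    simp only [rhs41, if_neg hi0, map_sub, map_one]
    ring
  rw [hsum]
  rw [Finset.sum_add_distrib, Finset.sum_sub_distrib, ← Finset.mul_sum, ← Finset.mul_sum,
    ← Finset.mul_sum, hEuler, ← hPhi]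
  have hrhs0 : rhs41 n ρ φ (0 : Fin n) = -(X 0) ^ 2 + φ 0 := by simp [rhs41]
  rw [hrhs0]
  have hA : opA ρ q = ∑ i ∈ Finset.univ.erase 0, C (ρ i) * (X i * pderiv i q) := rfl
  rw [← hA]
  have hcast : C ((a : ℂ) + (k : ℂ)) * (X 0 ^ (a+1) * q)
      = (a : R) * (X 0 ^ (a+1) * q) + C (k : ℂ) * (X 0 ^ (a+1) * q) := by
    rw [map_add, map_natCast C a]
    ring
  rw [hcast]
  have hc2 : C ((a : ℂ)) * (X 0 ^ (a-1) * (φ 0 * q)) = (a : R) * (X 0 ^ (a-1) * (φ 0 * q)) := by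
    rw [map_natCast C a]
  rw [hc2]
  have hhead := cast_mul_pow_head (n := n) a q q
  calc X 0 ^ (a+1) * opA ρ q - X 0 ^ (a+1) * (C (k:ℂ) * q) + X 0 ^ a * opPhi φ q
        + (-(X 0)^2 + φ 0) * ((a:R) * (X 0 ^ (a-1) * q))
      = X 0 ^ (a+1) * opA ρ q - X 0 ^ (a+1) * (C (k:ℂ) * q) + X 0 ^ a * opPhi φ q
        - (a : R) * (X 0 ^ 2 * (X 0 ^ (a-1) * q)) + (a:R) * (X 0 ^(a-1) * (φ 0 * q)) := by
        ring
    _ = _ := by rw [hhead]; ring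

end Key


lemma isHomog_cast {p : R} {a b : ℕ} (h : p.IsHomogeneous a) (hab : a = b) :
    p.IsHomogeneous b := hab ▸ h

lemma IsHomog.sub' {p q : R} {k : ℕ} (hp : p.IsHomogeneous k) (hq : q.IsHomogeneous k) :
    (p - q).IsHomogeneous k := by
  rw [← mem_homogeneousSubmodule] at *
  exact Submodule.sub_mem _ hp hq

lemma IsHomog.neg' {p : R} {k : ℕ} (hp : p.IsHomogeneous k) : (-p).IsHomogeneous k := by
  rw [← mem_homogeneousSubmodule] at *
  exact Submodule.neg_mem _ hp

lemma IsHomog.Cmul {p : R} {k : ℕ} (c : ℂ) (hp : p.IsHomogeneous k) :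
    (C c * p).IsHomogeneous k := by
  rw [← mem_homogeneousSubmodule, ← smul_eq_C_mul] at *
  exact Submodule.smul_mem _ _ hp

section Construct

variable (ρ : Fin n → ℂ) (φ : Fin n → MvPolynomial (Fin n) ℂ) (M : ℕ)
  (zs : Fin n →₀ ℕ) (N : ℕ)

/-- The sequence of slices `u_j` (first component), with second component the
previous slice. -/
noncomputable def useq : ℕ → R × R
  | 0 => ((monomial zs) 1, 0)
  | (j+1) => (opS ρ M (-(opPhi φ (useq j).1)
      - C ((N - j + 1 : ℕ) : ℂ) * (φ 0 * (useq j).2)), (useq j).1)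

variable {ρ φ M zs N}

lemma useq_inv (hφhom : ∀ i, (φ i).IsHomogeneous 2) (hφy : ∀ i, Yfree (φ i))
    (hz0 : zs 0 = 0) :
    ∀ j, Yfree (useq ρ φ M zs N j).1 ∧ Yfree (useq ρ φ M zs N j).2 ∧
      ((useq ρ φ M zs N j).1).IsHomogeneous (zs.degree + j) ∧
      ((φ 0) * (useq ρ φ M zs N j).2).IsHomogeneous (zs.degree + j + 1) := by
  intro j
  induction j with
  | zero =>
    refine ⟨?_, Yfree.zero, ?_, ?_⟩
    · intro σ hσ
      show coeff σ ((monomial zs) 1 : R) = 0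
      rw [coeff_monomial, if_neg]
      intro hc; subst hc; exact hσ hz0
    · exact isHomogeneous_monomial 1 rfl
    · simp only [useq, mul_zero]
      exact isHomogeneous_zero _ _ _
  | succ j ih =>
    obtain ⟨hy1, hy2, hh1, hh2⟩ := ih
    have hyfree : Yfree (useq ρ φ M zs N (j+1)).1 := by
      apply yfree_opS
      exact Yfree.sub (Yfree.neg (yfree_opPhi φ hφy hy1))
        (Yfree.Cmul _ (Yfree.mul (hφy 0) hy2))
    have hhom : ((useq ρ φ M zs N (j+1)).1).IsHomogeneous (zs.degree + (j+1)) := by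
      apply isHomog_opS
      apply IsHomog.sub'
      · exact IsHomog.neg' (isHomog_cast (isHomog_opPhi φ hφhom hh1) (by omega))
      · exact IsHomog.Cmul _ (isHomog_cast hh2 (by omega))
    refine ⟨hyfree, hy1, hhom, ?_⟩
    have : (useq ρ φ M zs N (j+1)).2 = (useq ρ φ M zs N j).1 := rfl
    rw [this]
    exact isHomog_cast ((hφhom 0).mul hh1) (by omega)

lemma useq_rec (hφhom : ∀ i, (φ i).IsHomogeneous 2) (hφy : ∀ i, Yfree (φ i))
    (hz0 : zs 0 = 0) (hN : zs.degree + N = M)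
    (hmax : ∀ σ : Fin n →₀ ℕ, σ 0 = 0 → W ρ σ = (M : ℂ) → σ.degree ≤ M →
      σ.degree ≤ zs.degree)
    (j : ℕ) (hj : j + 1 ≤ N) :
    opA ρ (useq ρ φ M zs N (j+1)).1 - (M : ℂ) • (useq ρ φ M zs N (j+1)).1
      = -(opPhi φ (useq ρ φ M zs N j).1)
        - C ((N - j + 1 : ℕ) : ℂ) * (φ 0 * (useq ρ φ M zs N j).2) := by
  obtain ⟨hy1, hy2, hh1, hh2⟩ := useq_inv hφhom hφy hz0 (N := N) (ρ := ρ) j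
  have h1 : (useq ρ φ M zs N (j+1)).1 = opS ρ M (-(opPhi φ (useq ρ φ M zs N j).1)
      - C ((N - j + 1 : ℕ) : ℂ) * (φ 0 * (useq ρ φ M zs N j).2)) := rfl
  rw [h1]
  apply opA_sub_opS
  intro σ hσ hW
  -- the polynomial is Yfree and homogeneous of degree zs.degree + j + 1
  have hyp : Yfree (-(opPhi φ (useq ρ φ M zs N j).1)
      - C ((N - j + 1 : ℕ) : ℂ) * (φ 0 * (useq ρ φ M zs N j).2)) := by
    exact Yfree.sub (Yfree.neg (yfree_opPhi φ hφy hy1))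
      (Yfree.Cmul _ (Yfree.mul (hφy 0) hy2))
  have hhp : (-(opPhi φ (useq ρ φ M zs N j).1)
      - C ((N - j + 1 : ℕ) : ℂ) * (φ 0 * (useq ρ φ M zs N j).2)).IsHomogeneous
      (zs.degree + j + 1) := by
    apply IsHomog.sub'
    · exact IsHomog.neg' (isHomog_opPhi φ hφhom hh1)
    · exact IsHomog.Cmul _ hh2
  have hσ0 : σ 0 = 0 := by
    by_contra hc
    exact hσ (hyp σ hc)
  have hdeg : σ.degree = zs.degree + j + 1 := by
    rw [isHomog_iff] at hhp
    exact hhp σ hσ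
  have := hmax σ hσ0 hW (by omega)
  omega

lemma opA_monomial_res (hWz : W ρ zs = (M : ℂ)) :
    opA ρ ((monomial zs) 1 : R) = C (M : ℂ) * (monomial zs) 1 := by
  ext σ
  rw [coeff_opA, coeff_C_mul, coeff_monomial]
  by_cases h : zs = σ
  · subst h; rw [hWz]
  · rw [if_neg h, mul_zero, mul_zero]

lemma dplus_Pz (hφhom : ∀ i, (φ i).IsHomogeneous 2) (hφy : ∀ i, Yfree (φ i))
    (hz0 : zs 0 = 0) (hN : zs.degree + N = M) (hWz : W ρ zs = (M : ℂ))
    (hmax : ∀ σ : Fin n →₀ ℕ, σ 0 = 0 → W ρ σ = (M : ℂ) → σ.degree ≤ M →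
      σ.degree ≤ zs.degree)
    (r : ℕ) (hr : r ≤ N) :
    dplus41 n ρ φ (∑ j ∈ Finset.range (r+1), X 0 ^ (N - j) * (useq ρ φ M zs N j).1)
      = X 0 ^ (N - r) * opPhi φ (useq ρ φ M zs N r).1
        + C ((N - r + 1 : ℕ) : ℂ) * (X 0 ^ (N - r) * (φ 0 * (useq ρ φ M zs N r).2))
        + C ((N - r : ℕ) : ℂ) * (X 0 ^ (N - r - 1) * (φ 0 * (useq ρ φ M zs N r).1)) := by
  induction r with
  | zero =>
    rw [Finset.range_one, Finset.sum_singleton]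
    obtain ⟨hy1, hy2, hh1, hh2⟩ := useq_inv hφhom hφy hz0 (N := N) (ρ := ρ) 0
    rw [key_identity ρ φ hφy hy1 hh1 (N - 0)]
    have h0 : (useq ρ φ M zs N 0).1 = (monomial zs) 1 := rfl
    have h2 : (useq ρ φ M zs N 0).2 = 0 := rfl
    rw [h0, h2, opA_monomial_res hWz]
    have hcast : ((N - 0 : ℕ) : ℂ) + ((zs.degree + 0 : ℕ) : ℂ) = (M : ℂ) := by
      have h : (N - 0) + (zs.degree + 0) = M := by omega
      rw [← h]; push_cast; ring
    rw [hcast]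
    ring
  | succ r ih =>
    have hrN : r ≤ N := by omega
    rw [Finset.sum_range_succ, map_add, ih hrN]
    obtain ⟨hy1, hy2, hh1, hh2⟩ := useq_inv hφhom hφy hz0 (N := N) (ρ := ρ) (r+1)
    rw [key_identity ρ φ hφy hy1 hh1 (N - (r+1))]
    have ha1 : N - (r+1) + 1 = N - r := by omega
    have hak : ((N - (r+1) : ℕ) : ℂ) + ((zs.degree + (r+1) : ℕ) : ℂ) = (M : ℂ) := by
      have : (N - (r+1)) + (zs.degree + (r+1)) = M := by omega
      push_cast [← this]
      push_cast [Nat.cast_sub hr]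
      ring
    rw [ha1, hak]
    have hrec := useq_rec hφhom hφy hz0 hN hmax r hr
    rw [smul_eq_C_mul] at hrec
    have hkey : X 0 ^ (N - r) * opA ρ (useq ρ φ M zs N (r+1)).1
        - C (M : ℂ) * (X 0 ^ (N - r) * (useq ρ φ M zs N (r+1)).1)
        = X 0 ^ (N - r) * (-(opPhi φ (useq ρ φ M zs N r).1)
            - C ((N - r + 1 : ℕ) : ℂ) * (φ 0 * (useq ρ φ M zs N r).2)) := by
      rw [← hrec]; ring
    have h2 : (useq ρ φ M zs N (r+1)).2 = (useq ρ φ M zs N r).1 := rfl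
    rw [h2, hkey]
    rw [show (N - r - 1 : ℕ) = N - (r+1) from by omega]
    ring

lemma exists_base (hφhom : ∀ i, (φ i).IsHomogeneous 2) (hφy : ∀ i, Yfree (φ i))
    (hz0 : zs 0 = 0) (hN : zs.degree + N = M) (hWz : W ρ zs = (M : ℂ))
    (hmax : ∀ σ : Fin n →₀ ℕ, σ 0 = 0 → W ρ σ = (M : ℂ) → σ.degree ≤ M →
      σ.degree ≤ zs.degree) :
    ∃ P : R, P.IsHomogeneous M ∧ pderiv (0 : Fin n) (dplus41 n ρ φ P) = 0 ∧ P ≠ 0 := by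
  classical
  set P : R := ∑ j ∈ Finset.range (N+1), X 0 ^ (N - j) * (useq ρ φ M zs N j).1 with hP
  refine ⟨P, ?_, ?_, ?_⟩
  · rw [← mem_homogeneousSubmodule]
    apply Submodule.sum_mem
    intro j hj
    rw [Finset.mem_range] at hj
    rw [mem_homogeneousSubmodule]
    have hx : ((X (0 : Fin n) : R) ^ (N - j)).IsHomogeneous (N - j) :=
      isHomogeneous_X_pow _ _
    have := hx.mul (useq_inv hφhom hφy hz0 (ρ := ρ) (M := M) (N := N) j).2.2.1
    exact isHomog_cast this (by omega)
  · rw [hP, dplus_Pz hφhom hφy hz0 hN hWz hmax N le_rfl]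
    apply pderiv_zero_of_yfree
    obtain ⟨hy1, hy2, hh1, hh2⟩ := useq_inv hφhom hφy hz0 (ρ := ρ) (M := M) (N := N) N
    apply Yfree.add
    apply Yfree.add
    · exact Yfree.mul (fun σ hσ => by
        rw [X_pow_eq_monomial, coeff_monomial, if_neg]
        intro hc; subst hc
        simp [Finsupp.single_apply] at hσ) (yfree_opPhi φ hφy hy1)
    · exact Yfree.Cmul _ (Yfree.mul (fun σ hσ => by
        rw [X_pow_eq_monomial, coeff_monomial, if_neg]
        intro hc; subst hc
        simp [Finsupp.single_apply] at hσ) (Yfree.mul (hφy 0) hy2))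
    · exact Yfree.Cmul _ (Yfree.mul (fun σ hσ => by
        rw [X_pow_eq_monomial, coeff_monomial, if_neg]
        intro hc; subst hc
        simp [Finsupp.single_apply] at hσ) (Yfree.mul (hφy 0) hy1))
  · intro hc
    have hco : coeff (zs + Finsupp.single 0 N) P = 1 := by
      rw [hP, MvPolynomial.coeff_sum]
      rw [Finset.sum_eq_single 0]
      · have h0 : (useq ρ φ M zs N 0).1 = (monomial zs) 1 := rfl
        rw [h0, Nat.sub_zero, X_pow_eq_monomial, monomial_mul, one_mul, coeff_monomial,
          if_pos (add_comm _ _)]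
      · intro j hjm hj0
        rw [Finset.mem_range] at hjm
        obtain ⟨hy1, _, _, _⟩ := useq_inv hφhom hφy hz0 (ρ := ρ) (M := M) (N := N) j
        rw [X_pow_eq_monomial, coeff_monomial_mul']
        by_cases hle : Finsupp.single (0 : Fin n) (N - j) ≤ zs + Finsupp.single 0 N
        · rw [if_pos hle, hy1 _ (by
            rw [Finsupp.tsub_apply, Finsupp.add_apply, Finsupp.single_eq_same,
              Finsupp.single_eq_same, hz0]
            omega), mul_zero]
        · rw [if_neg hle]
      · intro hc2
        simp at hc2
    rw [hc, coeff_zero] at hco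
    exact zero_ne_one hco

end Construct

section MCI

variable (ρ : Fin n → ℂ) (φ : Fin n → MvPolynomial (Fin n) ℂ) (M : ℕ)

lemma value_le_degree (σ : Fin n →₀ ℕ) (i : Fin n) : σ i ≤ σ.degree := by
  rw [degree_eq_sum]
  exact Finset.single_le_sum (fun _ _ => Nat.zero_le _) (Finset.mem_univ i)

lemma dplus_split (P : R) :
    dplus41 n ρ φ P = -(X 0 ^ 2 * pderiv 0 P)
      + (∑ i ∈ Finset.univ.erase 0, C (ρ i - 1) * (X 0 * (X i * pderiv i P)))
      + ∑ i, φ i * pderiv i P := by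
  rw [dplus41_apply, ← Finset.sum_erase_add _ _ (Finset.mem_univ (0 : Fin n)),
    ← Finset.sum_erase_add _ (fun i => φ i * pderiv i P) (Finset.mem_univ (0 : Fin n))]
  have h0 : rhs41 n ρ φ 0 * pderiv (0 : Fin n) P
      = -(X 0 ^ 2 * pderiv 0 P) + φ 0 * pderiv (0 : Fin n) P := by
    simp only [rhs41, eq_self_iff_true, if_true]
    ring
  have h1 : ∑ i ∈ Finset.univ.erase 0, rhs41 n ρ φ i * pderiv i P
      = ∑ i ∈ Finset.univ.erase 0,
          (C (ρ i - 1) * (X 0 * (X i * pderiv i P)) + φ i * pderiv i P) := by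
    apply Finset.sum_congr rfl
    intro i hi
    have hi0 : i ≠ 0 := Finset.ne_of_mem_erase hi
    simp only [rhs41, if_neg hi0]
    ring
  rw [h0, h1, Finset.sum_add_distrib]
  ring

lemma coeff_dplus (P : R) (μ : Fin n →₀ ℕ) (hμ : μ 0 ≠ 0) :
    coeff μ (dplus41 n ρ φ P)
      = (W ρ μ - (μ.degree : ℂ) + 1) * coeff (μ - Finsupp.single 0 1) P
        + coeff μ (∑ i, φ i * pderiv i P) := by
  classical
  rw [dplus_split, coeff_add, coeff_add, coeff_neg]
  have hc1 : coeff μ ((X 0 : R) ^ 2 * pderiv 0 P)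
      = ((μ 0 : ℂ) - 1) * coeff (μ - Finsupp.single 0 1) P := by
    rw [X_pow_eq_monomial, coeff_monomial_mul']
    by_cases h2 : Finsupp.single (0 : Fin n) 2 ≤ μ
    · have h2' : 2 ≤ μ 0 := by
        have := h2 0
        simpa using this
      rw [if_pos h2, one_mul, coeff_pderiv]
      have he : μ - Finsupp.single 0 2 + Finsupp.single 0 1 = μ - Finsupp.single 0 1 := by
        ext i
        simp only [Finsupp.add_apply, Finsupp.tsub_apply, Finsupp.single_apply]
        by_cases hi : (0 : Fin n) = i
        · subst hi; simp; omega
        · simp [hi]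
      have hv : ((μ - Finsupp.single 0 2 : Fin n →₀ ℕ)) 0 = μ 0 - 2 := by
        simp
      rw [he, hv]
      congr 1
      rw [Nat.cast_sub h2']
      push_cast
      ring
    · have h2' : ¬ 2 ≤ μ 0 := by
        intro hc
        apply h2
        intro i
        simp only [Finsupp.single_apply]
        by_cases hi : (0 : Fin n) = i
        · subst hi; simpa using hc
        · simp [hi]
      have hμ1 : μ 0 = 1 := by omega
      rw [if_neg h2, hμ1]
      norm_num
  have hc2 : ∀ i ∈ Finset.univ.erase 0,
      coeff μ (C (ρ i - 1) * (X 0 * (X i * pderiv i P)))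
        = (ρ i - 1) * ((μ i : ℂ) * coeff (μ - Finsupp.single 0 1) P) := by
    intro i hi
    have hi0 : i ≠ 0 := Finset.ne_of_mem_erase hi
    rw [coeff_C_mul, coeff_X_mul', if_pos (Finsupp.mem_support_iff.mpr hμ),
      coeff_X_mul_pderiv]
    have : ((μ - Finsupp.single 0 1 : Fin n →₀ ℕ)) i = μ i := by
      rw [Finsupp.tsub_apply, Finsupp.single_apply, if_neg (fun h => hi0 h.symm)]
      exact Nat.sub_zero _
    rw [this]
  rw [hc1, MvPolynomial.coeff_sum, Finset.sum_congr rfl hc2]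
  have hdeg : (μ.degree : ℂ) = (μ 0 : ℂ) + ∑ i ∈ Finset.univ.erase 0, (μ i : ℂ) := by
    rw [degree_eq_sum, ← Finset.add_sum_erase _ _ (Finset.mem_univ (0 : Fin n))]
    push_cast
    ring
  have hWdef : W ρ μ = ∑ i ∈ Finset.univ.erase 0, (μ i : ℂ) * ρ i := rfl
  rw [hdeg, hWdef]
  have hs : ∑ x ∈ Finset.univ.erase 0, (ρ x - 1) * ((μ x : ℂ) * coeff (μ - Finsupp.single 0 1) P)
      = ((∑ x ∈ Finset.univ.erase 0, (μ x : ℂ) * ρ x)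
          - ∑ x ∈ Finset.univ.erase 0, (μ x : ℂ)) * coeff (μ - Finsupp.single 0 1) P := by
    rw [sub_mul, Finset.sum_mul, Finset.sum_mul, ← Finset.sum_sub_distrib]
    apply Finset.sum_congr rfl
    intro x _
    ring
  rw [hs]
  ring

lemma vanish (hφy : ∀ i, Yfree (φ i)) (P : R) (hhom : P.IsHomogeneous M)
    (hker : pderiv (0 : Fin n) (dplus41 n ρ φ P) = 0)
    (hres : ∀ σ : Fin n →₀ ℕ, σ.degree = M → W ρ σ = (M : ℂ) → coeff σ P = 0) :
    P = 0 := by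
  have main : ∀ k, ∀ σ : Fin n →₀ ℕ, M - σ 0 < k → coeff σ P = 0 := by
    intro k
    induction k with
    | zero => intro σ h; omega
    | succ k ih =>
      intro σ hσk
      by_cases hdeg : σ.degree = M
      case neg =>
        by_contra hc
        exact hdeg (isHomog_iff.mp hhom σ hc)
      -- the key equation
      have hμ0 : ((σ + Finsupp.single 0 1) : Fin n →₀ ℕ) 0 ≠ 0 := by simp
      have h0 : coeff (σ + Finsupp.single 0 1) (dplus41 n ρ φ P) = 0 := by
        have := congrArg (coeff σ) hker
        rw [coeff_pderiv, coeff_zero] at this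
        rcases mul_eq_zero.mp this with h | h
        · exact absurd h (Nat.cast_add_one_ne_zero _)
        · exact h
      rw [coeff_dplus ρ φ P _ hμ0] at h0
      have hμsub : (σ + Finsupp.single 0 1) - Finsupp.single 0 1 = σ := by simp
      have hWμ : W ρ (σ + Finsupp.single 0 1) = W ρ σ := W_add_single ρ σ 1
      have hdegμ : (σ + Finsupp.single 0 1).degree = M + 1 := by
        rw [degree_add', degree_single', hdeg]
      have hσ0M : σ 0 ≤ M := by
        have := value_le_degree σ 0
        omega
      have hphi : coeff (σ + Finsupp.single 0 1) (∑ i, φ i * pderiv i P) = 0 := by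
        rw [MvPolynomial.coeff_sum]
        apply Finset.sum_eq_zero
        intro i _
        rw [coeff_mul]
        apply Finset.sum_eq_zero
        intro x hx
        rw [Finset.HasAntidiagonal.mem_antidiagonal] at hx
        by_cases hφc : coeff x.1 (φ i) = 0
        · rw [hφc, zero_mul]
        · have hx10 : x.1 0 = 0 := by
            by_contra hcc
            exact hφc (hφy i x.1 hcc)
          have hx20 : x.2 0 = σ 0 + 1 := by
            have := congrArg (fun τ : Fin n →₀ ℕ => τ 0) hx
            simpa [hx10] using this
          rw [coeff_pderiv]
          have hξ : coeff (x.2 + Finsupp.single i 1) P = 0 := by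
            have hξ0 : ((x.2 + Finsupp.single i 1) : Fin n →₀ ℕ) 0 ≥ σ 0 + 1 := by
              rw [Finsupp.add_apply, hx20]
              omega
            by_cases hξdeg : (x.2 + Finsupp.single i 1).degree = M
            · apply ih
              have := value_le_degree (x.2 + Finsupp.single i 1) 0
              omega
            · by_contra hcc
              exact hξdeg (isHomog_iff.mp hhom _ hcc)
          rw [hξ, mul_zero, mul_zero]
      rw [hphi, add_zero, hμsub, hWμ, hdegμ] at h0
      have hfac : W ρ σ - (↑(M + 1) : ℂ) + 1 = W ρ σ - (M : ℂ) := by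
        push_cast
        ring
      rw [hfac] at h0
      rcases mul_eq_zero.mp h0 with h | h
      · exact hres σ hdeg (by
          have := sub_eq_zero.mp h
          exact this)
      · exact h
  ext σ
  rw [coeff_zero]
  exact main (M - σ 0 + 1) σ (Nat.lt_succ_self _)

end MCI

end Thm7

/-- The space `L_M` of base functions of degree `M` of system (4.1):
homogeneous polynomials `P` of degree `M` such that `∂(D₊P)/∂y₁ = 0`. -/
noncomputable def baseSpace41 (n : ℕ) [NeZero n] (ρ : Fin n → ℂ)
    (φ : Fin n → MvPolynomial (Fin n) ℂ) (M : ℕ) :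
    Submodule ℂ (MvPolynomial (Fin n) ℂ) :=
  homogeneousSubmodule (Fin n) ℂ M ⊓
    LinearMap.ker ((pderiv (0 : Fin n)).toLinearMap.comp (dplus41 n ρ φ))

/-- The resonance set `J(M)`: tuples of nonnegative integers `z` (supported away
from the first index) with `z₂ρ₂ + ⋯ + zₙρₙ = M` and `z₂ + ⋯ + zₙ ≤ M`. -/
def resonanceSet (n : ℕ) [NeZero n] (ρ : Fin n → ℂ) (M : ℕ) : Set (Fin n → ℕ) :=
  {z | z 0 = 0 ∧ (∑ i, (z i : ℂ) * ρ i) = (M : ℂ) ∧ (∑ i, z i) ≤ M}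

/-- Theorem 7: if `J(M)` is nonempty, with (finite) cardinality `m`, then the
dimension `d` of the space `L_M` of base functions of degree `M` satisfies
`1 ≤ d ≤ m`. -/
theorem baseSpace_dim_bounds
    (n : ℕ) [NeZero n] (ρ : Fin n → ℂ)
    (φ : Fin n → MvPolynomial (Fin n) ℂ)
    (hφhom : ∀ i, (φ i).IsHomogeneous 2)
    (hφ0 : ∀ i, pderiv (0 : Fin n) (φ i) = 0)
    (M : ℕ)
    (hfin : (resonanceSet n ρ M).Finite)
    (hne : (resonanceSet n ρ M).Nonempty) :
    1 ≤ Module.rank ℂ (baseSpace41 n ρ φ M) ∧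
      Module.rank ℂ (baseSpace41 n ρ φ M) ≤ (hfin.toFinset.card : Cardinal) := by
  classical
  have hφy : ∀ i, Thm7.Yfree (φ i) := fun i => Thm7.yfree_of_pderiv_zero (hφ0 i)
  -- translation between `W` and the resonance sum
  have hW_eq : ∀ σ : Fin n →₀ ℕ, σ 0 = 0 →
      Thm7.W ρ σ = ∑ i, (σ i : ℂ) * ρ i := by
    intro σ h0
    rw [← Finset.add_sum_erase _ (fun i => (σ i : ℂ) * ρ i) (Finset.mem_univ (0 : Fin n)),
      h0]
    simp [Thm7.W]
  -- pick a resonance exponent of maximal degree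
  obtain ⟨z, hzmem, hzmax⟩ := hfin.toFinset.exists_max_image (fun z => ∑ i, z i)
    (by obtain ⟨x, hx⟩ := hne; exact ⟨x, hfin.mem_toFinset.mpr hx⟩)
  obtain ⟨hz0, hzW, hzle⟩ : (z : Fin n → ℕ) ∈ resonanceSet n ρ M := hfin.mem_toFinset.mp hzmem
  set zs : Fin n →₀ ℕ := Finsupp.equivFunOnFinite.symm z with hzsdef
  have hzs_apply : ∀ i, zs i = z i := fun i => by
    rw [hzsdef]; simp
  have hzsdeg : zs.degree = ∑ i, z i := by
    rw [Thm7.degree_eq_sum]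
    exact Finset.sum_congr rfl (fun i _ => hzs_apply i)
  have hzs0 : zs 0 = 0 := by rw [hzs_apply]; exact hz0
  have hWzs : Thm7.W ρ zs = (M : ℂ) := by
    rw [hW_eq zs hzs0, ← hzW]
    exact Finset.sum_congr rfl (fun i _ => by rw [hzs_apply])
  have hk0M : zs.degree ≤ M := by rw [hzsdeg]; exact hzle
  have hN : zs.degree + (M - zs.degree) = M := by omega
  have hmax : ∀ σ : Fin n →₀ ℕ, σ 0 = 0 → Thm7.W ρ σ = (M : ℂ) → σ.degree ≤ M →
      σ.degree ≤ zs.degree := by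
    intro σ h1 h2 h3
    have hmem : ⇑σ ∈ resonanceSet n ρ M := by
      refine ⟨h1, ?_, ?_⟩
      · rw [← hW_eq σ h1]; exact h2
      · rw [← Thm7.degree_eq_sum]; exact h3
    have := hzmax ⇑σ (hfin.mem_toFinset.mpr hmem)
    rw [hzsdeg, Thm7.degree_eq_sum]
    exact this
  obtain ⟨P, hPhom, hPker, hPne⟩ :=
    Thm7.exists_base (ρ := ρ) (φ := φ) (M := M) (zs := zs) (N := M - zs.degree)
      hφhom hφy hzs0 hN hWzs hmax
  have hPmem : P ∈ baseSpace41 n ρ φ M := by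
    rw [baseSpace41, Submodule.mem_inf]
    refine ⟨(mem_homogeneousSubmodule _ _).mpr hPhom, ?_⟩
    rw [LinearMap.mem_ker, LinearMap.comp_apply]
    exact hPker
  constructor
  · have : Nontrivial (baseSpace41 n ρ φ M) :=
      ⟨⟨P, hPmem⟩, 0, fun h => hPne (by simpa using congrArg Subtype.val h)⟩
    rw [Cardinal.one_le_iff_pos]
    exact rank_pos
  · let F : (baseSpace41 n ρ φ M) →ₗ[ℂ] (hfin.toFinset → ℂ) :=
      { toFun := fun Q t => MvPolynomial.coeff (Finsupp.equivFunOnFinite.symm (t : Fin n → ℕ)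
            + Finsupp.single 0 (M - ∑ i, (t : Fin n → ℕ) i)) (Q : MvPolynomial (Fin n) ℂ)
        map_add' := by intro x y; funext t; simp [MvPolynomial.coeff_add]
        map_smul' := by intro c x; funext t; simp [MvPolynomial.coeff_smul] }
    have hinj : Function.Injective F := by
      rw [← LinearMap.ker_eq_bot]
      apply LinearMap.ker_eq_bot'.mpr
      intro Q hQ
      obtain ⟨hQhom, hQker⟩ := Submodule.mem_inf.mp Q.2
      rw [mem_homogeneousSubmodule] at hQhom
      rw [LinearMap.mem_ker, LinearMap.comp_apply] at hQker
      have hQ0 : (Q : MvPolynomial (Fin n) ℂ) = 0 := by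
        apply Thm7.vanish ρ φ M hφy _ hQhom hQker
        intro σ hdeg hWσ
        have hσ0M : σ 0 ≤ M := by
          have := Thm7.value_le_degree σ 0
          omega
        set e : Fin n →₀ ℕ := σ.erase 0 with hedef
        have hesum : ∑ i, e i = M - σ 0 := by
          have h1 : ∑ i, σ i = M := by rw [← Thm7.degree_eq_sum, hdeg]
          rw [← Finset.add_sum_erase _ (fun i => e i) (Finset.mem_univ (0 : Fin n)),
            ← Finset.add_sum_erase _ (fun i => σ i) (Finset.mem_univ (0 : Fin n))] at *
          have h2 : e 0 = 0 := Finsupp.erase_same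
          have h3 : ∑ i ∈ Finset.univ.erase 0, e i = ∑ i ∈ Finset.univ.erase 0, σ i :=
            Finset.sum_congr rfl (fun i hi => Finsupp.erase_ne (Finset.ne_of_mem_erase hi))
          omega
        have hemem : ⇑e ∈ resonanceSet n ρ M := by
          refine ⟨Finsupp.erase_same, ?_, ?_⟩
          · rw [show ∑ i, (e i : ℂ) * ρ i = Thm7.W ρ σ from ?_, hWσ]
            rw [← Finset.add_sum_erase _ (fun i => (e i : ℂ) * ρ i)
              (Finset.mem_univ (0 : Fin n))]
            rw [show e 0 = 0 from Finsupp.erase_same]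
            simp only [Nat.cast_zero, zero_mul, zero_add]
            exact Finset.sum_congr rfl (fun i hi => by
              rw [Finsupp.erase_ne (Finset.ne_of_mem_erase hi)])
          · rw [hesum]; omega
        have hFz := congrFun hQ ⟨⇑e, hfin.mem_toFinset.mpr hemem⟩
        simp only [F, LinearMap.coe_mk, AddHom.coe_mk, Pi.zero_apply] at hFz
        have hexp : Finsupp.equivFunOnFinite.symm (⇑e) + Finsupp.single 0 (M - ∑ i, e i)
            = σ := by
          rw [Finsupp.equivFunOnFinite_symm_coe, hesum,
            show M - (M - σ 0) = σ 0 from by omega]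
          exact Finsupp.erase_add_single 0 σ
        rw [hexp] at hFz
        exact hFz
      exact Subtype.ext hQ0
    have hle := F.rank_le_of_injective hinj
    have hcard : Module.rank ℂ (hfin.toFinset → ℂ) = (hfin.toFinset.card : Cardinal) := by
      rw [rank_fun', Fintype.card_coe]
    rw [hcard] at hle
    exact hle
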